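/- Fix integers r ≥ 1, d ≥ 1, S ≥ 1, a point λ ∈ ℂ, coefficients a : Fin (d*r) → Fin r → Fin S → ℂ, an index α ∈ Fin r, and ζ ∈ ℂ with ζ ≠ 0 and ζ ≠ λ; set φ i γ := Σ_{s ∈ Fin S} (a i γ s)·X^s ∈ Polynomial ℂ. For t : Fin r → ℂ let N(t) be the (d·r)×(d·r) complex matrix with rows indexed by (j,γ) ∈ Fin d × Fin r and columns indexed by i ∈ Fin (d*r), with entries N(t)_{(j,γ),i} := Σ_{s ∈ Fin S} a i γ s * iteratedDeriv s (fun z => z^j * (1 − (if γ = α then z/ζ else 0)) * Complex.exp ((t γ)*z)) λ. Then det N(t) = (1 − λ/ζ)^d * Complex.exp (d*λ*(Σ_{γ ∈ Fin r} t γ)) * det of the matrix whose ((j,γ),i) entry is Polynomial.eval (t γ) ((T_λ)^[j] (φ i γ − (if γ = α then (ζ−λ)⁻¹ • Polynomial.derivative (φ i γ) else 0))). -/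

import Mathlib

open Polynomial

/-- The ℂ-linear operator `T_λ` on `ℂ[X]`, `T_λ(φ) = φ' + λ•φ`. -/
noncomputable def Tlam (l : ℂ) : Polynomial ℂ →ₗ[ℂ] Polynomial ℂ :=
  (Polynomial.derivative : Polynomial ℂ →ₗ[ℂ] Polynomial ℂ) + l • LinearMap.id

lemma Tlam_apply (l : ℂ) (p : Polynomial ℂ) :
    Tlam l p = derivative p + l • p := rfl

lemma Tlam_pow_one (l : ℂ) : ∀ j : ℕ, (Tlam l ^ j) (1 : Polynomial ℂ) = l ^ j • 1
  | 0 => by simp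
  | j + 1 => by
    rw [pow_succ', Module.End.mul_apply, Tlam_pow_one l j, map_smul, Tlam_apply]
    simp [pow_succ', smul_smul, mul_comm]

lemma Tlam_X_mul (c : ℂ) (p : Polynomial ℂ) :
    Tlam c (X * p) = X * Tlam c p + p := by
  rw [Tlam_apply, Tlam_apply, derivative_mul]
  simp [mul_add, smul_eq_C_mul]
  ring

lemma Tlam_pow_succ_X_mul (c : ℂ) : ∀ (n : ℕ) (p : Polynomial ℂ),
    (Tlam c ^ (n + 1)) (X * p) =
      X * (Tlam c ^ (n + 1)) p + ((n + 1 : ℕ) : ℂ) • (Tlam c ^ n) p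
  | 0, p => by simpa using Tlam_X_mul c p
  | n + 1, p => by
    have key : ∀ q : Polynomial ℂ,
        (Tlam c ^ (n + 1 + 1)) q = Tlam c ((Tlam c ^ (n + 1)) q) := fun q => by
      rw [pow_succ', Module.End.mul_apply]
    have h : Tlam c ((Tlam c ^ n) p) = (Tlam c ^ (n + 1)) p := by
      rw [pow_succ', Module.End.mul_apply]
    rw [key (X * p), Tlam_pow_succ_X_mul c n p, map_add, map_smul, Tlam_X_mul,
      key p, h]
    have hc : ((n + 1 + 1 : ℕ) : ℂ) = ((n + 1 : ℕ) : ℂ) + 1 := by push_cast; ring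
    rw [hc]
    simp only [smul_eq_C_mul, C_add, C_1]
    ring

lemma Tlam_symm (l t : ℂ) : ∀ (s j : ℕ),
    Polynomial.eval l ((Tlam t ^ s) ((X : Polynomial ℂ) ^ j)) =
      Polynomial.eval t ((Tlam l ^ j) ((X : Polynomial ℂ) ^ s))
  | 0, j => by
    rw [pow_zero, Module.End.one_apply, pow_zero (X : Polynomial ℂ), Tlam_pow_one]
    simp
  | s + 1, j => by
    rw [pow_succ, Module.End.mul_apply, Tlam_apply, derivative_X_pow, C_mul', map_add,
      map_smul, map_smul, eval_add, eval_smul, eval_smul, smul_eq_mul, smul_eq_mul,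
      Tlam_symm l t s (j - 1), Tlam_symm l t s j]
    cases j with
    | zero =>
      simp only [Nat.cast_zero, zero_mul, zero_add, pow_zero, Module.End.one_apply]
      rw [pow_succ]
      simp [mul_comm]
    | succ j =>
      have hx : (X : Polynomial ℂ) ^ (s + 1) = X * X ^ s := by ring
      rw [hx, Tlam_pow_succ_X_mul l j (X ^ s), eval_add, eval_smul, eval_mul, eval_X,
        smul_eq_mul]
      simp only [Nat.add_sub_cancel]
      push_cast
      ring

lemma iteratedDeriv_poly_exp (t l : ℂ) : ∀ (s : ℕ) (P : Polynomial ℂ),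
    iteratedDeriv s (fun z : ℂ => P.eval z * Complex.exp (t * z)) l =
      Polynomial.eval l ((Tlam t ^ s) P) * Complex.exp (t * l)
  | 0, P => by simp
  | s + 1, P => by
    rw [iteratedDeriv_succ']
    have hd : (deriv fun z : ℂ => P.eval z * Complex.exp (t * z)) =
        fun z : ℂ => (Tlam t P).eval z * Complex.exp (t * z) := by
      funext z
      have h1 : HasDerivAt (fun z : ℂ => P.eval z) (P.derivative.eval z) z :=
        P.hasDerivAt z
      have h2 : HasDerivAt (fun z : ℂ => Complex.exp (t * z))
          (Complex.exp (t * z) * t) z := by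
        simpa using ((hasDerivAt_id z).const_mul t).cexp
      have : deriv (fun z : ℂ => P.eval z * Complex.exp (t * z)) z = _ := (h1.mul h2).deriv
      rw [this, Tlam_apply]
      simp [eval_add, eval_smul, smul_eq_mul]
      ring
    rw [hd, iteratedDeriv_poly_exp t l s (Tlam t P), pow_succ, Module.End.mul_apply]

/-- for `ζ ≠ 0`, `ζ ≠ λ`, the determinant of the matrix
`N(t)_{(j,γ),i} = Σ_s a i γ s · d^s/dz^s (z^j (1 − δ_{γα} z/ζ) e^{t_γ z})|_{z=λ}`
equals `(1 − λ/ζ)^d · exp(d·λ·Σ_γ t_γ)` times the determinant of the matrix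
with entries `((T_λ)^j (φ i γ − δ_{γα} (ζ−λ)⁻¹·(φ i γ)')).eval (t_γ)`. -/
theorem det_onePoint_shifted_tau (r d S : ℕ) (hr : 1 ≤ r) (hd : 1 ≤ d)
    (hS : 1 ≤ S) (l : ℂ) (a : Fin (d * r) → Fin r → Fin S → ℂ)
    (α : Fin r) (ζ : ℂ) (hζ0 : ζ ≠ 0) (hζl : ζ ≠ l)
    (φ : Fin (d * r) → Fin r → Polynomial ℂ)
    (hφ : ∀ i γ, φ i γ = ∑ s : Fin S, a i γ s • (X : Polynomial ℂ) ^ (s : ℕ))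
    (N : (Fin r → ℂ) → Matrix (Fin d × Fin r) (Fin d × Fin r) ℂ)
    (hN : ∀ (t : Fin r → ℂ) (p q : Fin d × Fin r),
      N t p q = ∑ s : Fin S, a (finProdFinEquiv q) p.2 s *
        iteratedDeriv (s : ℕ)
          (fun z : ℂ => z ^ (p.1 : ℕ) * (1 - (if p.2 = α then z / ζ else 0)) *
            Complex.exp (t p.2 * z)) l) :
    ∀ t : Fin r → ℂ,
      (N t).det = (1 - l / ζ) ^ d *
        Complex.exp ((d : ℂ) * l * ∑ γ : Fin r, t γ) *
        (Matrix.of fun p q : Fin d × Fin r =>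
          Polynomial.eval (t p.2)
            ((Tlam l ^ (p.1 : ℕ))
              (φ (finProdFinEquiv q) p.2 -
                (if p.2 = α then
                  (ζ - l)⁻¹ • Polynomial.derivative (φ (finProdFinEquiv q) p.2)
                 else 0)))).det := by
  have hζl' : ζ - l ≠ 0 := sub_ne_zero.mpr hζl
  intro t
  set v : Fin d × Fin r → ℂ :=
    fun p => (if p.2 = α then 1 - l / ζ else 1) * Complex.exp (t p.2 * l) with hv
  set M : Matrix (Fin d × Fin r) (Fin d × Fin r) ℂ :=
    Matrix.of fun p q : Fin d × Fin r =>
      Polynomial.eval (t p.2)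
        ((Tlam l ^ (p.1 : ℕ))
          (φ (finProdFinEquiv q) p.2 -
            (if p.2 = α then
              (ζ - l)⁻¹ • Polynomial.derivative (φ (finProdFinEquiv q) p.2)
             else 0))) with hM
  have hmat : N t = Matrix.of fun p q => v p * M p q := by
    ext p q
    rw [hN t p q]
    simp only [Matrix.of_apply, hM, hv]
    set i := finProdFinEquiv q with hi
    set γ := p.2 with hγ
    set j := (p.1 : ℕ) with hj
    set τ := t p.2 with hτ
    have hsum : ∀ n : ℕ,
        ∑ s : Fin S, a i γ s *
          Polynomial.eval τ ((Tlam l ^ n) ((X : Polynomial ℂ) ^ (s : ℕ)))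
          = Polynomial.eval τ ((Tlam l ^ n) (φ i γ)) := by
      intro n
      rw [hφ, map_sum, eval_finset_sum]
      exact Finset.sum_congr rfl fun s _ => by rw [map_smul, eval_smul, smul_eq_mul]
    by_cases hpa : γ = α
    · simp only [if_pos hpa]
      have hfun : (fun z : ℂ => z ^ j * (1 - z / ζ) * Complex.exp (τ * z))
          = fun z : ℂ => Polynomial.eval z
              ((X : Polynomial ℂ) ^ j - ζ⁻¹ • (X : Polynomial ℂ) ^ (j + 1)) *
              Complex.exp (τ * z) := by
        funext z
        simp only [eval_sub, eval_smul, eval_pow, eval_X, smul_eq_mul]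
        ring
      rw [hfun]
      simp only [iteratedDeriv_poly_exp]
      simp only [map_sub, map_smul, eval_sub, eval_smul, smul_eq_mul, Tlam_symm l τ]
      have e1 := hsum j
      have e2 : ∑ s : Fin S, a i γ s *
          Polynomial.eval τ ((Tlam l ^ (j + 1)) ((X : Polynomial ℂ) ^ (s : ℕ)))
          = Polynomial.eval τ ((Tlam l ^ j) (derivative (φ i γ)))
            + l * Polynomial.eval τ ((Tlam l ^ j) (φ i γ)) := by
        rw [hsum (j + 1)]
        have hsplit : (Tlam l ^ (j + 1)) (φ i γ)
            = (Tlam l ^ j) (derivative (φ i γ)) + l • (Tlam l ^ j) (φ i γ) := by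
          rw [pow_succ, Module.End.mul_apply, Tlam_apply, map_add, map_smul]
        rw [hsplit, eval_add, eval_smul, smul_eq_mul]
      have step : ∀ s : Fin S, a i γ s *
          ((Polynomial.eval τ ((Tlam l ^ j) ((X : Polynomial ℂ) ^ (s : ℕ)))
            - ζ⁻¹ * Polynomial.eval τ ((Tlam l ^ (j + 1)) ((X : Polynomial ℂ) ^ (s : ℕ))))
            * Complex.exp (τ * l))
          = (a i γ s * Polynomial.eval τ ((Tlam l ^ j) ((X : Polynomial ℂ) ^ (s : ℕ))))
              * Complex.exp (τ * l)
            - ζ⁻¹ * ((a i γ s *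
                Polynomial.eval τ ((Tlam l ^ (j + 1)) ((X : Polynomial ℂ) ^ (s : ℕ))))
              * Complex.exp (τ * l)) := fun s => by ring
      rw [Finset.sum_congr rfl fun s _ => step s, Finset.sum_sub_distrib,
        ← Finset.sum_mul, ← Finset.mul_sum, ← Finset.sum_mul, e1, e2]
      field_simp
      ring
    · simp only [if_neg hpa]
      have hfun : (fun z : ℂ => z ^ j * (1 - 0) * Complex.exp (τ * z))
          = fun z : ℂ => Polynomial.eval z ((X : Polynomial ℂ) ^ j) *
              Complex.exp (τ * z) := by
        funext z
        simp
      rw [hfun]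
      simp only [iteratedDeriv_poly_exp]
      simp only [Tlam_symm l τ, sub_zero, one_mul]
      have step : ∀ s : Fin S, a i γ s *
          (Polynomial.eval τ ((Tlam l ^ j) ((X : Polynomial ℂ) ^ (s : ℕ)))
            * Complex.exp (τ * l))
          = (a i γ s * Polynomial.eval τ ((Tlam l ^ j) ((X : Polynomial ℂ) ^ (s : ℕ))))
            * Complex.exp (τ * l) := fun s => by ring
      rw [Finset.sum_congr rfl fun s _ => step s, ← Finset.sum_mul, hsum j]
      ring
  rw [hmat, Matrix.det_mul_column]
  have hprod : ∏ p : Fin d × Fin r, v p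
      = (1 - l / ζ) ^ d * Complex.exp ((d : ℂ) * l * ∑ γ : Fin r, t γ) := by
    rw [hv]
    rw [Finset.prod_mul_distrib]
    congr 1
    · rw [Fintype.prod_prod_type]
      simp
    · rw [← Complex.exp_sum]
      congr 1
      rw [Fintype.sum_prod_type]
      simp only [← Finset.sum_mul]
      rw [Finset.sum_const, Finset.card_univ, Fintype.card_fin, nsmul_eq_mul]
      ring
  rw [hprod]
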